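/- Let D > 16 be an integer with D ≡ 1 (mod 8) and D ≠ 41. Then 𝒬_D has exactly two components; moreover, ((w,h,t,e), ε) and ((w',h',t',e'), ε') lie in the same component if and only if either ε = ε' and e ≡ e' (mod 4), or ε = −ε' and e ≡ −e' (mod 4). -/

import Mathlib

/-- gcd of four integers. -/
def gcd4 (a b c d : ℤ) : ℕ := Int.gcd a (Int.gcd b (Int.gcd c d : ℤ) : ℤ)

/-- The prototype set `𝒫_D`: quadruples `(w,h,t,e)` with `w > 0`, `h > 0`,
`0 ≤ t < gcd(w,h)`, `e + 2h < w`, `gcd(w,h,t,e) = 1` and `D = e² + 8wh`. -/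
def IsProto (D : ℤ) (p : ℤ × ℤ × ℤ × ℤ) : Prop :=
  0 < p.1 ∧ 0 < p.2.1 ∧ 0 ≤ p.2.2.1 ∧ p.2.2.1 < (Int.gcd p.1 p.2.1 : ℤ) ∧
  p.2.2.2 + 2 * p.2.1 < p.1 ∧ gcd4 p.1 p.2.1 p.2.2.1 p.2.2.2 = 1 ∧
  D = p.2.2.2 ^ 2 + 8 * p.1 * p.2.1

/-- The Butterfly move `B_q` (for a positive integer `q`) relates `(w,h,t,e)` to
`(w',h',t',e')` whenever `(e+4qh)² < D`, `e' = -e-4qh` and `h' = gcd(qh, w+qt)`. -/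
def BMove (D q : ℤ) (p p' : ℤ × ℤ × ℤ × ℤ) : Prop :=
  (p.2.2.2 + 4 * q * p.2.1) ^ 2 < D ∧
  p'.2.2.2 = -p.2.2.2 - 4 * q * p.2.1 ∧
  p'.2.1 = (Int.gcd (q * p.2.1) (p.1 + q * p.2.2.1) : ℤ)

/-- The Butterfly move `B_∞` relates `(w,h,t,e)` to `(w',h',t',e')` whenever
`e' = -e-4h` and `h' = gcd(t,h)`. -/
def BMoveInf (p p' : ℤ × ℤ × ℤ × ℤ) : Prop :=
  p'.2.2.2 = -p.2.2.2 - 4 * p.2.1 ∧ p'.2.1 = (Int.gcd p.2.2.1 p.2.1 : ℤ)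

/-- Two prototypes of `𝒫_D` are related when some Butterfly move
`B_q`, `q ∈ {1,2,3,…} ∪ {∞}`, takes one to the other. -/
def Butterfly (D : ℤ) (p p' : ℤ × ℤ × ℤ × ℤ) : Prop :=
  IsProto D p ∧ IsProto D p' ∧ ((∃ q : ℤ, 0 < q ∧ BMove D q p p') ∨ BMoveInf p p')

/-- Membership in `𝒬_D = 𝒫_D × {+1, -1}`. -/
def IsProtoQ (D : ℤ) (x : (ℤ × ℤ × ℤ × ℤ) × ℤ) : Prop :=
  IsProto D x.1 ∧ (x.2 = 1 ∨ x.2 = -1)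

/-- The generating relation on `𝒬_D`: `(p, ε)` is related to `(p', -ε)` whenever `p` is
related to `p'` by a Butterfly move. -/
def QMove (D : ℤ) (x y : (ℤ × ℤ × ℤ × ℤ) × ℤ) : Prop :=
  Butterfly D x.1 y.1 ∧ y.2 = -x.2

/-! ### Auxiliary development -/

namespace Stmt14Aux

/-- the equivalence relation generated on `𝒬_D` -/
abbrev QC (D : ℤ) (x y : (ℤ × ℤ × ℤ × ℤ) × ℤ) : Prop := Relation.EqvGen (QMove D) x y

/-- reduced prototypes, parametrized by `e` -/
def Red (D e : ℤ) : ℤ × ℤ × ℤ × ℤ := ((D - e ^ 2) / 8, 1, 0, e)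

/-- conditions for `e` to give a reduced prototype -/
def RProto (D e : ℤ) : Prop := e % 2 = 1 ∧ e ^ 2 < D ∧ (e + 4) ^ 2 < D

lemma isProto_mk {D w h t e : ℤ} :
    IsProto D (w, h, t, e) ↔
      (0 < w ∧ 0 < h ∧ 0 ≤ t ∧ t < (Int.gcd w h : ℤ) ∧ e + 2 * h < w ∧
        gcd4 w h t e = 1 ∧ D = e ^ 2 + 8 * w * h) := Iff.rfl

lemma sq_between {a x b : ℤ} (h1 : a ≤ x) (h2 : x ≤ b) : x ^ 2 ≤ max (a ^ 2) (b ^ 2) := by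
  rcases le_total x 0 with h | h
  · exact le_max_of_le_left (by nlinarith)
  · exact le_max_of_le_right (by nlinarith)

lemma odd_sq_mod8 {e : ℤ} (he : e % 2 = 1) : e ^ 2 % 8 = 1 := by
  obtain ⟨k, rfl⟩ : ∃ k, e = 2 * k + 1 := ⟨(e - 1) / 2, by omega⟩
  obtain ⟨m, hm⟩ := Int.even_mul_succ_self k
  have h2 : (2 * k + 1) ^ 2 = 8 * m + 1 := by linear_combination 4 * hm
  omega

lemma eight_dvd_sub {D e : ℤ} (hD : D % 8 = 1) (he : e % 2 = 1) : 8 ∣ D - e ^ 2 := by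
  have := odd_sq_mod8 he; omega

lemma proto_odd {D : ℤ} (hD : D % 8 = 1) {p : ℤ × ℤ × ℤ × ℤ} (hp : IsProto D p) :
    p.2.2.2 % 2 = 1 := by
  obtain ⟨w, h, t, e⟩ := p
  obtain ⟨-, -, -, -, -, -, hD'⟩ := isProto_mk.mp hp
  rcases Int.even_or_odd e with ⟨k, hk⟩ | ⟨k, hk⟩
  · exfalso
    have h2 : D = 4 * (k * k) + 8 * (w * h) := by rw [hD', hk]; ring
    set a := k * k with ha
    set b := w * h with hb
    omega
  · show e % 2 = 1; omega

lemma proto_esq_lt {D w h t e : ℤ} (hp : IsProto D (w, h, t, e)) : e ^ 2 < D := by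
  obtain ⟨hw, hh, -, -, -, -, hD'⟩ := isProto_mk.mp hp
  nlinarith

lemma crit {D w h e : ℤ} (hh : 0 < h) (hD : D = e ^ 2 + 8 * w * h) :
    (e + 4 * h) ^ 2 < D ↔ e + 2 * h < w := by
  constructor <;> intro H <;> nlinarith

lemma gcd4_eq (w h t e : ℤ) :
    gcd4 w h t e = Nat.gcd w.natAbs (Nat.gcd h.natAbs (Nat.gcd t.natAbs e.natAbs)) := by
  simp [gcd4, Int.gcd]

lemma gcd4_t1 (w h e : ℤ) : gcd4 w h 1 e = 1 := by
  rw [gcd4_eq]; simp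

lemma nat_gcd_two_odd {n : ℕ} (hn : n % 2 = 1) : Nat.gcd 2 n = 1 := by
  rw [Nat.gcd_rec, hn]; simp

lemma nat_gcd_two_even {n : ℕ} (hn : n % 2 = 0) : Nat.gcd 2 n = 2 := by
  obtain ⟨k, rfl⟩ : ∃ k, n = 2 * k := ⟨n / 2, by omega⟩
  simpa using Nat.gcd_mul_left 2 1 k

lemma int_gcd_two_odd {w : ℤ} (hw : w % 2 = 1) : Int.gcd 2 w = 1 := by
  show Nat.gcd (2 : ℤ).natAbs w.natAbs = 1
  have : w.natAbs % 2 = 1 := by omega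
  simpa using nat_gcd_two_odd this

lemma int_gcd_two_even {w : ℤ} (hw : w % 2 = 0) : Int.gcd 2 w = 2 := by
  show Nat.gcd (2 : ℤ).natAbs w.natAbs = 2
  have : w.natAbs % 2 = 0 := by omega
  simpa using nat_gcd_two_even this

/-- gcd4 with t = 0 and h = 2 and e odd is 1 -/
lemma gcd4_w2 {w e : ℤ} (t : ℤ) (he : e % 2 = 1) (ht : t = 0 ∨ t = 1) : gcd4 w 2 t e = 1 := by
  rcases ht with rfl | rfl
  · rw [gcd4_eq]
    have h1 : Nat.gcd (0 : ℤ).natAbs e.natAbs = e.natAbs := by simp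
    rw [h1]
    have h2 : Nat.gcd (2 : ℤ).natAbs e.natAbs = 1 := by
      have : e.natAbs % 2 = 1 := by omega
      simpa using nat_gcd_two_odd this
    rw [h2]; simp
  · exact gcd4_t1 w 2 e

/-- construct a prototype with given `h'`, `e'` -/
lemma mk_proto {D h' e' : ℤ} (hh : 0 < h') (h1 : e' ^ 2 < D) (h2 : (e' + 4 * h') ^ 2 < D)
    (hdvd : 8 * h' ∣ D - e' ^ 2) :
    ∃ w' t', IsProto D (w', h', t', e') := by
  obtain ⟨w', hw'⟩ := hdvd
  have hD : D = e' ^ 2 + 8 * w' * h' := by linear_combination hw'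
  have hw'pos : 0 < w' := by nlinarith
  have hlt : e' + 2 * h' < w' := (crit hh hD).mp h2
  by_cases hg : Int.gcd w' h' = 1
  · refine ⟨w', 0, isProto_mk.mpr ⟨hw'pos, hh, le_refl 0, by rw [hg]; norm_num, hlt, ?_, hD⟩⟩
    -- gcd4 w' h' 0 e' = 1
    rw [gcd4_eq]
    have h0 : Nat.gcd (0 : ℤ).natAbs e'.natAbs = e'.natAbs := by simp
    rw [h0]
    set d := Nat.gcd w'.natAbs (Nat.gcd h'.natAbs e'.natAbs) with hd
    have d1 : d ∣ w'.natAbs := Nat.gcd_dvd_left _ _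
    have d2 : d ∣ h'.natAbs := (Nat.gcd_dvd_right _ _).trans (Nat.gcd_dvd_left _ _)
    have : d ∣ Nat.gcd w'.natAbs h'.natAbs := Nat.dvd_gcd d1 d2
    have hg' : Nat.gcd w'.natAbs h'.natAbs = 1 := hg
    rw [hg'] at this
    exact Nat.dvd_one.mp this
  · have hgne : Int.gcd w' h' ≠ 0 := by
      intro h0
      have := Int.gcd_eq_zero_iff.mp h0
      omega
    have hg2 : 2 ≤ Int.gcd w' h' := by omega
    refine ⟨w', 1, isProto_mk.mpr ⟨hw'pos, hh, by norm_num, ?_, hlt, gcd4_t1 _ _ _, hD⟩⟩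
    show (1 : ℤ) < (Int.gcd w' h' : ℤ)
    exact_mod_cast hg2

/-- completion of the butterfly move `B_q`: the target prototype always exists -/
lemma bq_complete {D w h t e q : ℤ} (hp : IsProto D (w, h, t, e))
    (hq : 0 < q) (hsq : (e + 4 * q * h) ^ 2 < D) :
    ∃ w2 h2 t2 e2, IsProto D (w2, h2, t2, e2) ∧ BMove D q (w, h, t, e) (w2, h2, t2, e2) ∧
      e2 = -e - 4 * q * h ∧ h2 = (Int.gcd (q * h) (w + q * t) : ℤ) := by
  have he2 : e ^ 2 < D := proto_esq_lt hp
  rw [isProto_mk] at hp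
  have hh : 0 < h := hp.2.1
  set e' : ℤ := -e - 4 * q * h with he'
  set h' : ℤ := (Int.gcd (q * h) (w + q * t) : ℤ) with hh'
  have hqh : 0 < q * h := mul_pos hq hh
  have hd1 : h' ∣ q * h := Int.gcd_dvd_left _ _
  have hd2 : h' ∣ w + q * t := Int.gcd_dvd_right _ _
  have hh'pos : 0 < h' := by
    have : Int.gcd (q * h) (w + q * t) ≠ 0 := by
      intro h0
      have := Int.gcd_eq_zero_iff.mp h0
      omega
    omega
  have hh'le : h' ≤ q * h := Int.le_of_dvd hqh hd1
  have h1 : e' ^ 2 < D := by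
    have : e' ^ 2 = (e + 4 * q * h) ^ 2 := by rw [he']; ring
    rw [this]; exact hsq
  have h2 : (e' + 4 * h') ^ 2 < D := by
    have lb : -(e + 4 * q * h) + 4 ≤ e' + 4 * h' := by rw [he']; linarith
    have ub : e' + 4 * h' ≤ -e := by rw [he']; linarith
    have step1 : (e' + 4 * h') ^ 2 ≤ max ((e + 4 * (q * h - 1)) ^ 2) (e ^ 2) :=
      calc (e' + 4 * h') ^ 2 ≤ max ((-(e + 4 * q * h) + 4) ^ 2) ((-e) ^ 2) := sq_between lb ub
        _ = max ((e + 4 * (q * h - 1)) ^ 2) (e ^ 2) := by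
            rw [show -(e + 4 * q * h) + 4 = -(e + 4 * (q * h - 1)) by ring, neg_sq, neg_sq]
    have step2 : (e + 4 * (q * h - 1)) ^ 2 < D := by
      have hb : (e + 4 * (q * h - 1)) ^ 2 ≤ max (e ^ 2) ((e + 4 * (q * h)) ^ 2) :=
        sq_between (by linarith) (by linarith)
      have : (e + 4 * (q * h)) ^ 2 = (e + 4 * q * h) ^ 2 := by ring
      rw [this] at hb
      exact lt_of_le_of_lt hb (max_lt he2 hsq)
    exact lt_of_le_of_lt step1 (max_lt step2 he2)
  have hdvd : 8 * h' ∣ D - e' ^ 2 := by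
    have hDe : D = e ^ 2 + 8 * w * h := hp.2.2.2.2.2.2
    have key : D - e' ^ 2 = 8 * ((w * h - (q * h) * e) - 2 * (q * h) * (q * h)) := by
      rw [he', hDe]; ring
    have d1 : h' ∣ w * h := by
      have hwh : w * h = (w + q * t) * h - t * (q * h) := by ring
      rw [hwh]
      exact dvd_sub (hd2.mul_right h) (hd1.mul_left t)
    have d2 : h' ∣ (q * h) * e := hd1.mul_right e
    have d3 : h' ∣ 2 * (q * h) * (q * h) := (hd1.mul_left (2 * (q * h)))
    rw [key]
    exact mul_dvd_mul_left 8 (dvd_sub (dvd_sub d1 d2) d3)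
  obtain ⟨w2, t2, hp2⟩ := mk_proto hh'pos h1 h2 hdvd
  refine ⟨w2, h', t2, e', hp2, ⟨hsq, rfl, rfl⟩, rfl, rfl⟩

/-- completion of the butterfly move `B_∞` -/
lemma binf_complete {D w h t e : ℤ} (hp : IsProto D (w, h, t, e)) :
    ∃ w2 h2 t2 e2, IsProto D (w2, h2, t2, e2) ∧ BMoveInf (w, h, t, e) (w2, h2, t2, e2) ∧
      e2 = -e - 4 * h ∧ h2 = (Int.gcd t h : ℤ) := by
  have he2 : e ^ 2 < D := proto_esq_lt hp
  rw [isProto_mk] at hp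
  have hh : 0 < h := hp.2.1
  have hDe : D = e ^ 2 + 8 * w * h := hp.2.2.2.2.2.2
  have hlt : e + 2 * h < w := hp.2.2.2.2.1
  set e' : ℤ := -e - 4 * h with he'
  set h' : ℤ := (Int.gcd t h : ℤ) with hh'
  have hd1 : h' ∣ h := Int.gcd_dvd_right _ _
  have hh'pos : 0 < h' := by
    have : Int.gcd t h ≠ 0 := by
      intro h0
      have := Int.gcd_eq_zero_iff.mp h0
      omega
    omega
  have hh'le : h' ≤ h := Int.le_of_dvd hh hd1
  have h1 : e' ^ 2 < D := by
    have : e' ^ 2 = (e + 4 * h) ^ 2 := by rw [he']; ring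
    rw [this]
    exact (crit hh hDe).mpr hlt
  have h2 : (e' + 4 * h') ^ 2 < D := by
    have hsq : (e + 4 * h) ^ 2 < D := (crit hh hDe).mpr hlt
    have lb : -(e + 4 * h) + 4 ≤ e' + 4 * h' := by rw [he']; linarith
    have ub : e' + 4 * h' ≤ -e := by rw [he']; linarith
    have step1 : (e' + 4 * h') ^ 2 ≤ max ((e + 4 * (h - 1)) ^ 2) (e ^ 2) :=
      calc (e' + 4 * h') ^ 2 ≤ max ((-(e + 4 * h) + 4) ^ 2) ((-e) ^ 2) := sq_between lb ub
        _ = max ((e + 4 * (h - 1)) ^ 2) (e ^ 2) := by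
            rw [show -(e + 4 * h) + 4 = -(e + 4 * (h - 1)) by ring, neg_sq, neg_sq]
    have step2 : (e + 4 * (h - 1)) ^ 2 < D := by
      have hb : (e + 4 * (h - 1)) ^ 2 ≤ max (e ^ 2) ((e + 4 * h) ^ 2) :=
        sq_between (by linarith) (by linarith)
      exact lt_of_le_of_lt hb (max_lt he2 hsq)
    exact lt_of_le_of_lt step1 (max_lt step2 he2)
  have hdvd : 8 * h' ∣ D - e' ^ 2 := by
    have key : D - e' ^ 2 = 8 * (h * (w - e - 2 * h)) := by rw [he', hDe]; ring
    rw [key]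
    exact mul_dvd_mul_left 8 (hd1.mul_right _)
  obtain ⟨w2, t2, hp2⟩ := mk_proto hh'pos h1 h2 hdvd
  refine ⟨w2, h', t2, e', hp2, ⟨rfl, rfl⟩, rfl, rfl⟩

lemma red_isProto {D e : ℤ} (hD8 : D % 8 = 1) (h : RProto D e) : IsProto D (Red D e) := by
  obtain ⟨he, h1, h2⟩ := h
  obtain ⟨w, hw⟩ := eight_dvd_sub hD8 he
  have hwe : (D - e ^ 2) / 8 = w := by rw [hw]; exact Int.mul_ediv_cancel_left w (by norm_num)
  have hD : D = e ^ 2 + 8 * w * 1 := by linear_combination hw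
  have hwpos : 0 < w := by nlinarith
  have hred : Red D e = (w, 1, 0, e) := by simp [Red, hwe]
  rw [hred, isProto_mk]
  refine ⟨hwpos, by norm_num, le_refl 0, ?_, ?_, ?_, hD⟩
  · have hg : Int.gcd w 1 = 1 := by simp [Int.gcd]
    rw [hg]; norm_num
  · have := (crit (by norm_num : (0:ℤ) < 1) hD).mp (by nlinarith : (e + 4 * 1) ^ 2 < D)
    linarith
  · rw [gcd4_eq]; simp

/-- a prototype with `h = 1` is a reduced prototype -/
lemma proto_h1 {D w t e : ℤ} (hD8 : D % 8 = 1) (hp : IsProto D (w, 1, t, e)) :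
    (w, 1, t, e) = Red D e ∧ RProto D e := by
  have he : e % 2 = 1 := proto_odd hD8 hp
  obtain ⟨hw, hh, ht0, htlt, hlt, hg4, hDe⟩ := isProto_mk.mp hp
  have hg : Int.gcd w 1 = 1 := by simp [Int.gcd]
  rw [hg] at htlt
  have ht : t = 0 := by omega
  have h8 : D - e ^ 2 = 8 * w := by linear_combination hDe
  have hwe : (D - e ^ 2) / 8 = w := by rw [h8]; exact Int.mul_ediv_cancel_left w (by norm_num)
  have h1 : e ^ 2 < D := by nlinarith
  have h2 : (e + 4) ^ 2 < D := by
    have := (crit (by norm_num : (0:ℤ) < 1) hDe).mpr hlt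
    nlinarith [this]
  constructor
  · simp [Red, hwe, ht]
  · exact ⟨he, h1, h2⟩

lemma rproto_neg {D e : ℤ} (he : RProto D e) : RProto D (-e - 4) := by
  obtain ⟨h1, h2, h3⟩ := he
  refine ⟨by omega, ?_, ?_⟩
  · rw [show (-e - 4) ^ 2 = (e + 4) ^ 2 by ring]; exact h3
  · rw [show (-e - 4 + 4) ^ 2 = e ^ 2 by ring]; exact h2

/-! ### Chains in 𝒬 -/

lemma qc_step {D : ℤ} {p p' : ℤ × ℤ × ℤ × ℤ} (hb : Butterfly D p p') (ε : ℤ) :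
    QC D (p, ε) (p', -ε) :=
  Relation.EqvGen.rel _ _ ⟨hb, rfl⟩

/-- σ : a reduced prototype is related to its reflection, by `B_∞`. -/
lemma qc_sigma {D e : ℤ} (hD8 : D % 8 = 1) (he : RProto D e) (ε : ℤ) :
    QC D (Red D e, ε) (Red D (-e - 4), -ε) := by
  have he' : RProto D (-e - 4) := rproto_neg he
  apply qc_step
  refine ⟨red_isProto hD8 he, red_isProto hD8 he', Or.inr ⟨?_, ?_⟩⟩
  · show -e - 4 = -e - 4 * 1; ring
  · show (1 : ℤ) = (Int.gcd 0 1 : ℤ); decide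

/-- The R2 move: `e ~ -e-8` whenever both sides are reduced prototypes. -/
lemma qc_r2 {D e : ℤ} (hD8 : D % 8 = 1) (he : RProto D e) (h8 : (e + 8) ^ 2 < D) (ε : ℤ) :
    QC D (Red D e, ε) (Red D (-e - 8), -ε) := by
  obtain ⟨hodd, h1, h2⟩ := he
  obtain ⟨w, hw⟩ := eight_dvd_sub hD8 hodd
  have hwe : (D - e ^ 2) / 8 = w := by rw [hw]; exact Int.mul_ediv_cancel_left w (by norm_num)
  have hRed : Red D e = (w, 1, 0, e) := by simp [Red, hwe]
  have hpe : IsProto D (w, 1, 0, e) := hRed ▸ red_isProto hD8 ⟨hodd, h1, h2⟩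
  have hD : D = e ^ 2 + 8 * w * 1 := by linear_combination hw
  have hw0 : 0 < w := by nlinarith
  have he' : RProto D (-e - 8) := by
    refine ⟨by omega, ?_, ?_⟩
    · rw [show (-e - 8) ^ 2 = (e + 8) ^ 2 by ring]; exact h8
    · rw [show (-e - 8 + 4) ^ 2 = (e + 4) ^ 2 by ring]; exact h2
  have hpe' : IsProto D (Red D (-e - 8)) := red_isProto hD8 he'
  rcases Int.even_or_odd w with hwev | hwod
  · -- w even : three moves through level 2
    obtain ⟨m, hm⟩ := hwev
    have hm0 : 0 < m := by omega
    have hD16 : D = e ^ 2 + 16 * m := by rw [hD, hm]; ring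
    have hem : e + 4 < m := by nlinarith
    -- P1 = (m - e - 4, 2, 0, -e-8)
    have hp1 : IsProto D (m - e - 4, 2, 0, -e - 8) := by
      rw [isProto_mk]
      refine ⟨by nlinarith, by norm_num, le_refl 0, ?_, by linarith, ?_, by linear_combination hD16⟩
      · show (0 : ℤ) < (Int.gcd (m - e - 4) 2 : ℤ)
        have : Int.gcd (m - e - 4) 2 ≠ 0 := by
          intro h0; have := Int.gcd_eq_zero_iff.mp h0; omega
        omega
      · exact gcd4_w2 0 (by omega) (Or.inl rfl)
    -- P2 = (m, 2, t2, e)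
    set t2 : ℤ := if m % 2 = 1 then 0 else 1 with ht2
    have hp2 : IsProto D (m, 2, t2, e) := by
      rw [isProto_mk]
      refine ⟨hm0, by norm_num, ?_, ?_, by linarith, ?_, by linear_combination hD16⟩
      · rw [ht2]; split <;> norm_num
      · show t2 < (Int.gcd m 2 : ℤ)
        rcases Int.even_or_odd m with ⟨r, hr⟩ | ⟨r, hr⟩
        · have hpar : m % 2 = 0 := by omega
          have hg2 : Int.gcd m 2 = 2 := by rw [Int.gcd_comm]; exact int_gcd_two_even hpar
          rw [hg2, ht2, if_neg (by omega)]; norm_num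
        · have hpar : m % 2 = 1 := by omega
          have hne : Int.gcd m 2 ≠ 0 := by
            intro h0; have := Int.gcd_eq_zero_iff.mp h0; omega
          rw [ht2, if_pos hpar]
          omega
      · apply gcd4_w2 t2 hodd
        rw [ht2]; split
        · exact Or.inl rfl
        · exact Or.inr rfl
    -- move 1 : B_2 from (w,1,0,e) to P1
    have mv1 : QC D ((w, 1, 0, e), ε) ((m - e - 4, 2, 0, -e - 8), -ε) := by
      apply qc_step
      refine ⟨hpe, hp1, Or.inl ⟨2, by norm_num, ?_, ?_, ?_⟩⟩
      · show (e + 4 * 2 * 1) ^ 2 < D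
        rw [show e + 4 * 2 * 1 = e + 8 by ring]; exact h8
      · show -e - 8 = -e - 4 * 2 * 1; ring
      · show (2 : ℤ) = (Int.gcd (2 * 1) (w + 2 * 0) : ℤ)
        have : Int.gcd (2 * 1) (w + 2 * 0) = Int.gcd 2 w := by norm_num
        rw [this, int_gcd_two_even (by omega)]; norm_num
    -- move 2 : B_∞ from P1 to P2
    have mv2 : QC D ((m - e - 4, 2, 0, -e - 8), -ε) ((m, 2, t2, e), ε) := by
      have h := qc_step (D := D) (p := (m - e - 4, 2, 0, -e - 8)) (p' := (m, 2, t2, e))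
        (by
          refine ⟨hp1, hp2, Or.inr ⟨?_, ?_⟩⟩
          · show e = -(-e - 8) - 4 * 2; ring
          · show (2 : ℤ) = (Int.gcd 0 2 : ℤ); decide) (-ε)
      rwa [neg_neg] at h
    -- move 3 : from P2 to Red D (-e-8)
    have mv3 : QC D ((m, 2, t2, e), ε) (Red D (-e - 8), -ε) := by
      apply qc_step
      rcases Int.even_or_odd m with ⟨r, hr⟩ | ⟨r, hr⟩
      · -- m even : t2 = 1, use B_∞
        have ht2' : t2 = 1 := by rw [ht2, if_neg (by omega)]
        refine ⟨hp2, hpe', Or.inr ⟨?_, ?_⟩⟩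
        · show (Red D (-e - 8)).2.2.2 = -e - 4 * 2
          show -e - 8 = -e - 4 * 2; ring
        · show (Red D (-e - 8)).2.1 = (Int.gcd t2 2 : ℤ)
          show (1 : ℤ) = (Int.gcd t2 2 : ℤ)
          rw [ht2']; decide
      · -- m odd : t2 = 0, use B_1
        have ht2' : t2 = 0 := by rw [ht2, if_pos (by omega)]
        refine ⟨hp2, hpe', Or.inl ⟨1, by norm_num, ?_, ?_, ?_⟩⟩
        · show (e + 4 * 1 * 2) ^ 2 < D
          rw [show e + 4 * 1 * 2 = e + 8 by ring]; exact h8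
        · show (Red D (-e - 8)).2.2.2 = -e - 4 * 1 * 2
          show -e - 8 = -e - 4 * 1 * 2; ring
        · show (Red D (-e - 8)).2.1 = (Int.gcd (1 * 2) (m + 1 * t2) : ℤ)
          show (1 : ℤ) = (Int.gcd (1 * 2) (m + 1 * t2) : ℤ)
          rw [ht2']
          have h2m : Int.gcd (1 * 2) (m + 1 * 0) = Int.gcd 2 m := by norm_num
          rw [h2m, int_gcd_two_odd (by omega)]; norm_num
    rw [hRed]
    exact Relation.EqvGen.trans _ _ _ (Relation.EqvGen.trans _ _ _ mv1 mv2) mv3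
  · -- w odd : direct B_2
    rw [hRed]
    apply qc_step
    obtain ⟨k, hk⟩ := hwod
    refine ⟨hpe, hpe', Or.inl ⟨2, by norm_num, ?_, ?_, ?_⟩⟩
    · show (e + 4 * 2 * 1) ^ 2 < D
      rw [show e + 4 * 2 * 1 = e + 8 by ring]; exact h8
    · show (Red D (-e - 8)).2.2.2 = -e - 4 * 2 * 1
      show -e - 8 = -e - 4 * 2 * 1; ring
    · show (Red D (-e - 8)).2.1 = (Int.gcd (2 * 1) (w + 2 * 0) : ℤ)
      show (1 : ℤ) = (Int.gcd (2 * 1) (w + 2 * 0) : ℤ)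
      have : Int.gcd (2 * 1) (w + 2 * 0) = Int.gcd 2 w := by norm_num
      rw [this, int_gcd_two_odd (by omega)]; norm_num

/-- translation by 4 among reduced prototypes -/
lemma qc_trans4 {D e : ℤ} (hD8 : D % 8 = 1) (he : RProto D e) (he4 : RProto D (e + 4)) (ε : ℤ) :
    QC D (Red D e, ε) (Red D (e + 4), ε) := by
  have h8 : (e + 8) ^ 2 < D := by
    have := he4.2.2
    rw [show (e + 4 + 4) ^ 2 = (e + 8) ^ 2 by ring] at this
    exact this
  have step1 := qc_r2 hD8 he h8 ε
  have he' : RProto D (-e - 8) := by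
    obtain ⟨hodd, h1, h2⟩ := he
    refine ⟨by omega, ?_, ?_⟩
    · rw [show (-e - 8) ^ 2 = (e + 8) ^ 2 by ring]; exact h8
    · rw [show (-e - 8 + 4) ^ 2 = (e + 4) ^ 2 by ring]; exact h2
  have step2 := qc_sigma hD8 he' (-ε)
  rw [neg_neg, show -(-e - 8) - 4 = e + 4 by ring] at step2
  exact Relation.EqvGen.trans _ _ _ step1 step2

/-- chains of translations -/
lemma qc_chain {D : ℤ} (hD8 : D % 8 = 1) :
    ∀ n : ℕ, ∀ e : ℤ, RProto D e → RProto D (e + 4 * n) → ∀ ε : ℤ,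
      QC D (Red D e, ε) (Red D (e + 4 * n), ε) := by
  intro n
  induction n with
  | zero => intro e he _ ε; simpa using Relation.EqvGen.refl _
  | succ n IH =>
    intro e he hen ε
    have hcast : e + 4 * ((n : ℤ) + 1) = (e + 4 * n) + 4 := by ring
    rw [show ((n + 1 : ℕ) : ℤ) = (n : ℤ) + 1 by push_cast; ring, hcast] at hen ⊢
    have hmid : RProto D (e + 4 * n) := by
      obtain ⟨hodd, h1, h2⟩ := he
      obtain ⟨hodd', h1', h2'⟩ := hen
      refine ⟨by omega, ?_, ?_⟩
      · have hb : (e + 4 * (n : ℤ)) ^ 2 ≤ max (e ^ 2) ((e + 4 * n + 4) ^ 2) :=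
          sq_between (by have : (0:ℤ) ≤ (n:ℤ) := Int.natCast_nonneg n; linarith) (by linarith)
        exact lt_of_le_of_lt hb (max_lt h1 h1')
      · have hb : (e + 4 * (n : ℤ) + 4) ^ 2 ≤ max ((e + 4) ^ 2) ((e + 4 * n + 4) ^ 2) :=
          sq_between (by have : (0:ℤ) ≤ (n:ℤ) := Int.natCast_nonneg n; linarith) (le_refl _)
        exact lt_of_le_of_lt hb (max_lt h2 h1')
    exact Relation.EqvGen.trans _ _ _ (IH e he hmid ε) (qc_trans4 hD8 hmid hen ε)

/-- common divisor transfer for gcd-one proofs -/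
lemma gcd_one_trans {h e x : ℤ} (hge : Nat.gcd h.natAbs e.natAbs = 1)
    (hdvd : ∀ d : ℤ, d ∣ h → d ∣ x → d ∣ e) : Nat.gcd h.natAbs x.natAbs = 1 := by
  set d := Nat.gcd h.natAbs x.natAbs with hddef
  have dh : d ∣ h.natAbs := Nat.gcd_dvd_left _ _
  have dx : d ∣ x.natAbs := Nat.gcd_dvd_right _ _
  have dhz : (d : ℤ) ∣ h := (Int.natCast_dvd_natCast.mpr dh).trans (Int.natAbs_dvd.mpr dvd_rfl)
  have dxz : (d : ℤ) ∣ x := (Int.natCast_dvd_natCast.mpr dx).trans (Int.natAbs_dvd.mpr dvd_rfl)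
  have dez : (d : ℤ) ∣ e := hdvd d dhz dxz
  have de : d ∣ e.natAbs := Int.natCast_dvd_natCast.mp (Int.dvd_natAbs.mpr dez)
  have hfin : d ∣ Nat.gcd h.natAbs e.natAbs := Nat.dvd_gcd dh de
  rw [hge] at hfin
  exact Nat.dvd_one.mp hfin

/-- every prototype is connected to a reduced prototype -/
lemma reduce {D : ℤ} (hD8 : D % 8 = 1) :
    ∀ n : ℕ, ∀ w h t e ε : ℤ, IsProto D (w, h, t, e) → h ≤ (n : ℤ) →
      ∃ e' δ : ℤ, RProto D e' ∧ QC D ((w, h, t, e), ε) (Red D e', δ) := by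
  intro n
  induction n using Nat.strong_induction_on with
  | _ n IH =>
    intro w h t e ε hp hhn
    obtain ⟨hw, hh, ht0, htlt, hlt, hg4, hDe⟩ := isProto_mk.mp hp
    rcases eq_or_lt_of_le (show (1 : ℤ) ≤ h by omega) with h1 | h1
    · -- h = 1 : already reduced
      obtain rfl : h = 1 := h1.symm
      obtain ⟨hEq, hR⟩ := proto_h1 hD8 hp
      exact ⟨e, ε, hR, by rw [hEq]; exact Relation.EqvGen.refl _⟩
    · by_cases ht : t = 0
      · subst ht
        have hsq : (e + 4 * 1 * h) ^ 2 < D := by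
          rw [show e + 4 * 1 * h = e + 4 * h by ring]
          exact (crit hh hDe).mpr hlt
        have hgdvdh : (Int.gcd h w : ℤ) ∣ h := Int.gcd_dvd_left _ _
        have hgle : (Int.gcd h w : ℤ) ≤ h := Int.le_of_dvd hh hgdvdh
        rcases lt_or_eq_of_le hgle with hglt | hgeq
        · -- gcd h w < h : one B₁ move decreases h
          obtain ⟨w2, h2, t2, e2, hp2, hm2, he2, hh2⟩ := bq_complete hp one_pos hsq
          have hh2' : h2 = (Int.gcd h w : ℤ) := by
            rw [hh2]
            norm_num [Int.gcd_comm]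
          have hh2pos : 0 < h2 := by
            rw [hh2']
            have : Int.gcd h w ≠ 0 := by
              intro h0; have := Int.gcd_eq_zero_iff.mp h0; omega
            omega
          obtain ⟨e', δ, hR, hQ⟩ := IH (n - 1) (by omega) w2 h2 t2 e2 (-ε) hp2
            (by rw [hh2']; omega)
          refine ⟨e', δ, hR, Relation.EqvGen.trans _ _ _ ?_ hQ⟩
          exact qc_step ⟨hp, hp2, Or.inl ⟨1, one_pos, hm2⟩⟩ ε
        · -- gcd h w = h, i.e. h ∣ w : two explicit B₁ moves
          have hdvdw : h ∣ w := by
            have := Int.gcd_dvd_right (a := h) (b := w)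
            rwa [hgeq] at this
          -- gcd(h,e) = 1
          have hge : Nat.gcd h.natAbs e.natAbs = 1 := by
            have hg4' := hg4
            rw [gcd4_eq] at hg4'
            have h0 : Nat.gcd (0 : ℤ).natAbs e.natAbs = e.natAbs := by simp
            rw [h0] at hg4'
            set g := Nat.gcd h.natAbs e.natAbs with hgdef
            have hg_h : g ∣ h.natAbs := Nat.gcd_dvd_left _ _
            have hg_w : g ∣ w.natAbs := hg_h.trans (Int.natAbs_dvd_natAbs.mpr hdvdw)
            have hgw : Nat.gcd w.natAbs g = g :=
              Nat.dvd_antisymm (Nat.gcd_dvd_right _ _) (Nat.dvd_gcd hg_w dvd_rfl)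
            rw [hgw] at hg4'
            exact hg4'
          -- the intermediate prototype
          set e1 : ℤ := -e - 4 * h with he1
          set w1 : ℤ := w - e - 2 * h with hw1
          have hge1 : Nat.gcd h.natAbs e1.natAbs = 1 := by
            apply gcd_one_trans hge
            intro d dh dx
            have : e = -(e1 + 4 * h) := by rw [he1]; ring
            rw [this]
            exact dvd_neg.mpr (dvd_add dx (dh.mul_left 4))
          have hp1 : IsProto D (w1, h, 0, e1) := by
            rw [isProto_mk]
            refine ⟨by omega, hh, le_refl 0, ?_, by rw [he1, hw1]; linarith, ?_, ?_⟩
            · have : Int.gcd w1 h ≠ 0 := by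
                intro h0; have := Int.gcd_eq_zero_iff.mp h0; omega
              omega
            · rw [gcd4_eq]
              have h0 : Nat.gcd (0 : ℤ).natAbs e1.natAbs = e1.natAbs := by simp
              rw [h0, hge1]
              simp
            · rw [he1, hw1]; linear_combination hDe
          have bm1 : BMove D 1 (w, h, 0, e) (w1, h, 0, e1) := by
            refine ⟨hsq, ?_, ?_⟩
            · show e1 = -e - 4 * 1 * h; rw [he1]; ring
            · show h = (Int.gcd (1 * h) (w + 1 * 0) : ℤ)
              have : Int.gcd (1 * h) (w + 1 * 0) = Int.gcd h w := by norm_num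
              rw [this, hgeq]
          -- second move
          have hsq2 : (e1 + 4 * 1 * h) ^ 2 < D := by
            rw [show e1 + 4 * 1 * h = -e by rw [he1]; ring]
            rw [neg_sq]
            exact proto_esq_lt hp
          obtain ⟨w3, h3, t3, e3, hp3, hm3, he3, hh3⟩ := bq_complete hp1 one_pos hsq2
          have he3' : e3 = e := by rw [he3, he1]; ring
          have hh3' : h3 = 1 := by
            rw [hh3]
            have hgw1 : Nat.gcd h.natAbs w1.natAbs = 1 := by
              apply gcd_one_trans hge
              intro d dh dx
              have : e = w - w1 - 2 * h := by rw [hw1]; ring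
              rw [this]
              exact dvd_sub (dvd_sub (dh.trans hdvdw) dx) (dh.mul_left 2)
            have : Int.gcd (1 * h) (w1 + 1 * 0) = Int.gcd h w1 := by norm_num
            rw [this]
            show ((Int.gcd h w1 : ℕ) : ℤ) = 1
            have : Int.gcd h w1 = 1 := hgw1
            rw [this]; norm_num
          rw [he3', hh3'] at hp3 hm3
          obtain ⟨hEq, hR⟩ := proto_h1 hD8 hp3
          refine ⟨e, ε, hR, ?_⟩
          have step1 : QC D ((w, h, 0, e), ε) ((w1, h, 0, e1), -ε) :=
            qc_step ⟨hp, hp1, Or.inl ⟨1, one_pos, bm1⟩⟩ ε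
          have step2 : QC D ((w1, h, 0, e1), -ε) ((w3, 1, t3, e), ε) := by
            have := qc_step ⟨hp1, hp3, Or.inl ⟨1, one_pos, hm3⟩⟩ (-ε)
            rwa [neg_neg] at this
          rw [← hEq]
          exact Relation.EqvGen.trans _ _ _ step1 step2
      · -- t > 0 : B_∞ decreases h
        have htpos : 0 < t := by omega
        obtain ⟨w2, h2, t2, e2, hp2, hm2, he2, hh2⟩ := binf_complete hp
        have hd1 : (Int.gcd t h : ℤ) ∣ t := Int.gcd_dvd_left _ _
        have hle1 : (Int.gcd t h : ℤ) ≤ t := Int.le_of_dvd htpos hd1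
        have hgwh : (Int.gcd w h : ℤ) ≤ h := Int.le_of_dvd hh (Int.gcd_dvd_right _ _)
        have hh2pos : 0 < h2 := by
          rw [hh2]
          have : Int.gcd t h ≠ 0 := by
            intro h0; have := Int.gcd_eq_zero_iff.mp h0; omega
          omega
        obtain ⟨e', δ, hR, hQ⟩ := IH (n - 1) (by omega) w2 h2 t2 e2 (-ε) hp2
          (by rw [hh2]; omega)
        refine ⟨e', δ, hR, Relation.EqvGen.trans _ _ _ ?_ hQ⟩
        exact qc_step ⟨hp, hp2, Or.inr hm2⟩ ε

lemma rproto_m1 {D : ℤ} (h16 : 16 < D) : RProto D (-1) := by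
  refine ⟨by norm_num, ?_, ?_⟩
  · norm_num; linarith
  · norm_num; linarith

lemma rproto_m3 {D : ℤ} (h16 : 16 < D) : RProto D (-3) := by
  refine ⟨by norm_num, ?_, ?_⟩
  · norm_num; linarith
  · norm_num; linarith

/-- connecting reduced prototypes in the same residue class -/
lemma qc_up {D e f : ℤ} (hD8 : D % 8 = 1) (he : RProto D e) (hf : RProto D f)
    (hmod4 : e % 4 = f % 4) (hle : e ≤ f) (ε : ℤ) :
    QC D (Red D e, ε) (Red D f, ε) := by
  obtain ⟨n, hn⟩ : ∃ n : ℕ, f = e + 4 * (n : ℤ) := ⟨((f - e) / 4).toNat, by omega⟩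
  subst hn
  exact qc_chain hD8 n e he hf ε

/-- every reduced prototype is connected to the hub `Red D (-1)` -/
lemma qc_hub {D e : ℤ} (hD8 : D % 8 = 1) (h16 : 16 < D) (he : RProto D e) (ε : ℤ) :
    ∃ δ, QC D (Red D e, ε) (Red D (-1), δ) := by
  have hm1 : RProto D (-1) := rproto_m1 h16
  have hm3 : RProto D (-3) := rproto_m3 h16
  have hodd := he.1
  have hs3 : QC D (Red D (-3), ε) (Red D (-1), -ε) := by
    have hs := qc_sigma hD8 hm3 ε
    rwa [show -(-3 : ℤ) - 4 = -1 by norm_num] at hs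
  rcases (by omega : e % 4 = 1 ∨ e % 4 = 3) with h4 | h4
  · -- e ≡ 1 ≡ -3 (mod 4)
    rcases le_total e (-3) with hle | hle
    · have hup := qc_up hD8 he hm3 (by omega) hle ε
      exact ⟨-ε, Relation.EqvGen.trans _ _ _ hup hs3⟩
    · have hup := qc_up hD8 hm3 he (by omega) hle ε
      exact ⟨-ε, Relation.EqvGen.trans _ _ _ (Relation.EqvGen.symm _ _ hup) hs3⟩
  · -- e ≡ 3 ≡ -1 (mod 4)
    rcases le_total e (-1) with hle | hle
    · exact ⟨ε, qc_up hD8 he hm1 (by omega) hle ε⟩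
    · exact ⟨ε, Relation.EqvGen.symm _ _ (qc_up hD8 hm1 he (by omega) hle ε)⟩

/-- the spin invariant -/
def sinv (x : (ℤ × ℤ × ℤ × ℤ) × ℤ) : ℤ := x.2 * (if x.1.2.2.2 % 4 = 1 then 1 else -1)

lemma sinv_qmove {D : ℤ} (hD8 : D % 8 = 1) {x y : (ℤ × ℤ × ℤ × ℤ) × ℤ}
    (h : QMove D x y) : sinv x = sinv y := by
  obtain ⟨⟨hpx, hpy, hmov⟩, hsgn⟩ := h
  have hex : x.1.2.2.2 % 2 = 1 := proto_odd hD8 hpx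
  have hey : y.1.2.2.2 % 2 = 1 := proto_odd hD8 hpy
  have hsum : ∃ a : ℤ, y.1.2.2.2 = -x.1.2.2.2 - 4 * a := by
    rcases hmov with ⟨q, hq, hm⟩ | hm
    · exact ⟨q * x.1.2.1, by rw [hm.2.1]; ring⟩
    · exact ⟨x.1.2.1, by rw [hm.1]⟩
  obtain ⟨a, ha⟩ := hsum
  have h4 : (x.1.2.2.2 % 4 = 1 ∧ y.1.2.2.2 % 4 = 3) ∨
      (x.1.2.2.2 % 4 = 3 ∧ y.1.2.2.2 % 4 = 1) := by omega
  unfold sinv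
  rw [hsgn]
  rcases h4 with ⟨u, v⟩ | ⟨u, v⟩ <;> rw [u, v] <;> norm_num

lemma sinv_qc {D : ℤ} (hD8 : D % 8 = 1) {x y : (ℤ × ℤ × ℤ × ℤ) × ℤ}
    (h : QC D x y) : sinv x = sinv y := by
  induction h with
  | rel _ _ h => exact sinv_qmove hD8 h
  | refl _ => rfl
  | symm _ _ _ ih => exact ih.symm
  | trans _ _ _ _ _ ih1 ih2 => exact ih1.trans ih2

lemma to_hub {D : ℤ} (hD8 : D % 8 = 1) (h16 : 16 < D) {x : (ℤ × ℤ × ℤ × ℤ) × ℤ}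
    (hx : IsProtoQ D x) : ∃ δ, QC D x (Red D (-1), δ) := by
  obtain ⟨⟨w, h, t, e⟩, ε⟩ := x
  obtain ⟨hp, -⟩ := hx
  have hh : 0 < h := (isProto_mk.mp hp).2.1
  obtain ⟨e', δ, hR, hQ⟩ := reduce hD8 h.toNat w h t e ε hp (by omega)
  obtain ⟨δ', hQ'⟩ := qc_hub hD8 h16 hR δ
  exact ⟨δ', Relation.EqvGen.trans _ _ _ hQ hQ'⟩

lemma sinv_red_m1 (D δ : ℤ) : sinv (Red D (-1), δ) = -δ := by
  unfold sinv Red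
  norm_num

end Stmt14Aux

theorem stmt14 (D : ℤ) (h16 : 16 < D) (hmod : D % 8 = 1) (h41 : D ≠ 41) :
    (∃ x, IsProtoQ D x ∧ ∃ y, IsProtoQ D y ∧
      ¬ Relation.EqvGen (QMove D) x y ∧
      ∀ z, IsProtoQ D z →
        Relation.EqvGen (QMove D) z x ∨ Relation.EqvGen (QMove D) z y) ∧
    (∀ x, IsProtoQ D x → ∀ y, IsProtoQ D y →
      (Relation.EqvGen (QMove D) x y ↔
        ((x.2 = y.2 ∧ x.1.2.2.2 % 4 = y.1.2.2.2 % 4) ∨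
         (x.2 = -y.2 ∧ x.1.2.2.2 % 4 = (-y.1.2.2.2) % 4)))) := by
  classical
  obtain hm1 := Stmt14Aux.rproto_m1 h16
  have hpRed : IsProto D (Stmt14Aux.Red D (-1)) := Stmt14Aux.red_isProto hmod hm1
  constructor
  · -- two components
    refine ⟨(Stmt14Aux.Red D (-1), 1), ⟨hpRed, Or.inl rfl⟩,
      (Stmt14Aux.Red D (-1), -1), ⟨hpRed, Or.inr rfl⟩, ?_, ?_⟩
    · intro hcon
      have hsv := Stmt14Aux.sinv_qc hmod hcon
      have h1 := Stmt14Aux.sinv_red_m1 D 1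
      have h2 := Stmt14Aux.sinv_red_m1 D (-1)
      omega
    · intro z hz
      obtain ⟨δ, hQ⟩ := Stmt14Aux.to_hub hmod h16 hz
      have hi := Stmt14Aux.sinv_qc hmod hQ
      have h2 := Stmt14Aux.sinv_red_m1 D δ
      have h3 : Stmt14Aux.sinv z = 1 ∨ Stmt14Aux.sinv z = -1 := by
        obtain ⟨-, hs⟩ := hz
        rcases hs with h | h <;> unfold Stmt14Aux.sinv <;> rw [h] <;> split <;> norm_num
      have : δ = 1 ∨ δ = -1 := by omega
      rcases this with rfl | rfl
      · exact Or.inl hQ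
      · exact Or.inr hQ
  · intro x hx y hy
    obtain ⟨px, sx⟩ := x
    obtain ⟨py, sy⟩ := y
    have hox : px.2.2.2 % 2 = 1 := Stmt14Aux.proto_odd hmod hx.1
    have hoy : py.2.2.2 % 2 = 1 := Stmt14Aux.proto_odd hmod hy.1
    have hsx : sx = 1 ∨ sx = -1 := hx.2
    have hsy : sy = 1 ∨ sy = -1 := hy.2
    constructor
    · intro hxy
      have hinv := Stmt14Aux.sinv_qc hmod hxy
      unfold Stmt14Aux.sinv at hinv
      dsimp only at hinv ⊢
      rcases hsx with rfl | rfl <;> rcases hsy with rfl | rfl <;>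
        split_ifs at hinv <;> omega
    · intro hRHS
      have hinv : Stmt14Aux.sinv (px, sx) = Stmt14Aux.sinv (py, sy) := by
        unfold Stmt14Aux.sinv
        dsimp only
        dsimp only at hRHS
        rcases hsx with rfl | rfl <;> rcases hsy with rfl | rfl <;>
          split_ifs <;> omega
      obtain ⟨δx, hQx⟩ := Stmt14Aux.to_hub hmod h16 hx
      obtain ⟨δy, hQy⟩ := Stmt14Aux.to_hub hmod h16 hy
      have e1 := Stmt14Aux.sinv_qc hmod hQx
      have e2 := Stmt14Aux.sinv_qc hmod hQy
      have e3 := Stmt14Aux.sinv_red_m1 D δx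
      have e4 := Stmt14Aux.sinv_red_m1 D δy
      have hδ : δx = δy := by omega
      subst hδ
      exact Relation.EqvGen.trans _ _ _ hQx (Relation.EqvGen.symm _ _ hQy)
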